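/- The only subspaces of S invariant under all of the Bernard–Felder operators e_n, h_n, f_n (n ∈ ℤ) are {0} and S itself if and only if K ≠ 0; that is, the Bernard–Felder module is irreducible if and only if K ≠ 0. -/

import Mathlib

open MvPolynomial

/-- The ring `S = ℂ[x_m (m ∈ ℤ); y_k (k ≥ 1)]`: `inl m` indexes `x_m`, `inr k`
indexes `y_k`. -/
abbrev SSpace : Type := MvPolynomial (ℤ ⊕ {k : ℕ // 1 ≤ k}) ℂ

/-- `f_n` : multiplication by `x_n`.  (Applied to each polynomial, all the `∑ᶠ` sums
appearing below are finite, so they compute the intended operators.) -/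
noncomputable def fop (n : ℤ) : SSpace → SSpace := fun q => X (Sum.inl n) * q

/-- `h_n = −2 Σ_{m∈ℤ} x_{m+n} ∂_{x_m} + [n<0] y_{−n}· + [n>0] 2nK ∂_{y_n} + δ_{n,0} J`. -/
noncomputable def hop (K J : ℂ) (n : ℤ) : SSpace → SSpace := fun q =>
  -((2 : ℂ) • ∑ᶠ m : ℤ, X (Sum.inl (m + n)) * pderiv (Sum.inl m) q)
  + (if hn : n < 0 then X (Sum.inr ⟨(-n).toNat, by omega⟩) * q else 0)
  + (if hn : 0 < n then (2 * (n : ℂ) * K) • pderiv (Sum.inr ⟨n.toNat, by omega⟩) q else 0)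
  + (if n = 0 then J else 0) • q

/-- `e_n = −Σ_{m,k∈ℤ} x_{k+m+n} ∂_{x_k} ∂_{x_m} + Σ_{k>0} y_k ∂_{x_{−k−n}}
 + 2K Σ_{m>0} m ∂_{y_m} ∂_{x_{m−n}} + (Kn+J) ∂_{x_{−n}}`. -/
noncomputable def eop (K J : ℂ) (n : ℤ) : SSpace → SSpace := fun q =>
  -(∑ᶠ mk : ℤ × ℤ, X (Sum.inl (mk.2 + mk.1 + n)) *
      pderiv (Sum.inl mk.2) (pderiv (Sum.inl mk.1) q))
  + (∑ᶠ k : {k : ℕ // 1 ≤ k}, X (Sum.inr k) * pderiv (Sum.inl (-(k : ℤ) - n)) q)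
  + (2 * K) • ∑ᶠ m : {m : ℕ // 1 ≤ m}, ((m : ℕ) : ℂ) •
      pderiv (Sum.inr m) (pderiv (Sum.inl ((m : ℤ) - n)) q)
  + (K * (n : ℂ) + J) • pderiv (Sum.inl (-n)) q

section Generic
variable {σ : Type*}

theorem bf_coeff_pderiv (i : σ) (s : σ →₀ ℕ) (p : MvPolynomial σ ℂ) :
    coeff s (pderiv i p) = ((s i : ℂ) + 1) * coeff (s + Finsupp.single i 1) p := by
  classical
  induction p using MvPolynomial.induction_on' with
  | monomial u a =>
    rw [pderiv_monomial, coeff_monomial, coeff_monomial]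
    by_cases h : u = s + Finsupp.single i 1
    · subst h
      have h1 : (s + Finsupp.single i 1) - Finsupp.single i 1 = s := by
        ext a
        rw [Finsupp.tsub_apply, Finsupp.add_apply]
        omega
      have h2 : (s + Finsupp.single i 1 : σ →₀ ℕ) i = s i + 1 := by
        rw [Finsupp.add_apply, Finsupp.single_eq_same]
      rw [if_pos h1, if_pos rfl, h2]
      push_cast; ring
    · rw [if_neg h, mul_zero]
      by_cases h2 : u - Finsupp.single i 1 = s
      · have hu : u i = 0 := by
          by_contra hu
          apply h
          ext a
          have h2' : (u - Finsupp.single i 1 : σ →₀ ℕ) a = s a := by rw [h2]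
          rw [Finsupp.tsub_apply] at h2'
          rw [Finsupp.add_apply]
          by_cases ha : a = i
          · subst ha
            rw [Finsupp.single_eq_same] at *
            omega
          · rw [Finsupp.single_eq_of_ne' (fun hh => ha hh.symm)] at *
            omega
        rw [if_pos h2, hu]
        simp
      · rw [if_neg h2]
  | add p q hp hq => simp [hp, hq, mul_add]

theorem bf_mem_support_pderiv {i : σ} {s : σ →₀ ℕ} {p : MvPolynomial σ ℂ}
    (h : s ∈ (pderiv i p).support) : s + Finsupp.single i 1 ∈ p.support := by
  rw [MvPolynomial.mem_support_iff] at *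
  rw [bf_coeff_pderiv] at h
  exact fun h0 => h (by rw [h0, mul_zero])

theorem bf_pderiv_comm (i j : σ) (p : MvPolynomial σ ℂ) :
    pderiv i (pderiv j p) = pderiv j (pderiv i p) := by
  classical
  by_cases hij : i = j
  · rw [hij]
  · ext s
    rw [bf_coeff_pderiv, bf_coeff_pderiv, bf_coeff_pderiv, bf_coeff_pderiv]
    have h1 : (s + Finsupp.single j 1 : σ →₀ ℕ) i = s i := by
      rw [Finsupp.add_apply, Finsupp.single_eq_of_ne' (Ne.symm hij), add_zero]
    have h2 : (s + Finsupp.single i 1 : σ →₀ ℕ) j = s j := by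
      rw [Finsupp.add_apply, Finsupp.single_eq_of_ne' hij, add_zero]
    rw [h1, h2, add_right_comm]
    ring

theorem bf_eq_C_of_pderiv_eq_zero {p : MvPolynomial σ ℂ}
    (h : ∀ i, pderiv i p = 0) : p = C (coeff 0 p) := by
  classical
  ext s
  by_cases hs : s = 0
  · simp [hs]
  · rw [coeff_C, if_neg (Ne.symm hs)]
    obtain ⟨i, hi⟩ : ∃ i, s i ≠ 0 := by
      by_contra hc
      push_neg at hc
      exact hs (Finsupp.ext hc)
    have hcp := bf_coeff_pderiv i (s - Finsupp.single i 1) p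
    rw [h i] at hcp
    have hss : (s - Finsupp.single i 1) + Finsupp.single i 1 = s := by
      ext a
      rw [Finsupp.add_apply, Finsupp.tsub_apply]
      by_cases ha : a = i
      · subst ha; rw [Finsupp.single_eq_same]; omega
      · rw [Finsupp.single_eq_of_ne' (fun hh => ha hh.symm)]; omega
    rw [hss] at hcp
    have hne : (((s - Finsupp.single i 1 : σ →₀ ℕ) i : ℂ) + 1) ≠ 0 := by
      have hq : ((((s - Finsupp.single i 1 : σ →₀ ℕ) i + 1 : ℕ)) : ℂ) ≠ 0 :=
        Nat.cast_ne_zero.mpr (by omega)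
      push_cast at hq
      exact hq
    simpa [coeff_zero] using (mul_eq_zero.mp hcp.symm).resolve_left hne

theorem bf_totalDegree_pderiv_lt {i : σ} {p : MvPolynomial σ ℂ}
    (h : pderiv i p ≠ 0) : (pderiv i p).totalDegree < p.totalDegree := by
  classical
  have hne : (pderiv i p).support.Nonempty := support_nonempty.mpr h
  have hb : ∀ s ∈ (pderiv i p).support, (s.sum fun _ e => e) + 1 ≤ p.totalDegree := by
    intro s hs
    have hle := le_totalDegree (bf_mem_support_pderiv hs)
    rw [Finsupp.sum_add_index (by simp) (by simp)] at hle
    simpa using hle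
  obtain ⟨s0, hs0⟩ := hne
  have hpos : 0 < p.totalDegree := lt_of_lt_of_le (Nat.succ_pos _) (hb s0 hs0)
  rw [totalDegree, Finset.sup_lt_iff (by simpa using hpos)]
  intro s hs
  exact lt_of_lt_of_le (Nat.lt_succ_self _) (hb s hs)

theorem bf_coeff_finsum_eq_zero {ι : Type*} {g : ι → MvPolynomial σ ℂ} {t : σ →₀ ℕ}
    (h : ∀ i, coeff t (g i) = 0) : coeff t (∑ᶠ i, g i) = 0 := by
  by_cases hf : (Function.support g).Finite
  · rw [finsum_eq_sum g hf, coeff_sum]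
    exact Finset.sum_eq_zero fun i _ => h i
  · rw [finsum_of_infinite_support hf, coeff_zero]

theorem bf_finsum_mem_submodule {M : Type*} {ι : Type*} [AddCommMonoid M] [Module ℂ M]
    (N : Submodule ℂ M) (g : ι → M) (h : ∀ i, g i ∈ N) : (∑ᶠ i, g i) ∈ N := by
  by_cases hf : (Function.support g).Finite
  · rw [finsum_eq_sum g hf]
    exact Submodule.sum_mem N fun i _ => h i
  · rw [finsum_of_infinite_support hf]
    exact N.zero_mem

theorem bf_coeff_finsum_eq_single {ι : Type*} {g : ι → MvPolynomial σ ℂ} {t : σ →₀ ℕ} (i₀ : ι)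
    (hf : (Function.support g).Finite) (h : ∀ i, i ≠ i₀ → coeff t (g i) = 0) :
    coeff t (∑ᶠ i, g i) = coeff t (g i₀) := by
  classical
  rw [finsum_eq_sum g hf, coeff_sum]
  refine Finset.sum_eq_single i₀ (fun b _ hb => h b hb) (fun hi => ?_)
  rw [Set.Finite.mem_toFinset, Function.mem_support, not_not] at hi
  rw [hi, coeff_zero]

end Generic

namespace BFaux

abbrev κB : Type := {k : ℕ // 1 ≤ k}
abbrev σB : Type := ℤ ⊕ κB

/-- weight of a variable for the x-degree -/
def wX : σB → ℕ := Sum.elim (fun _ => 1) (fun _ => 0)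

/-- total x-degree of a monomial. -/
def sumX (s : σB →₀ ℕ) : ℕ := s.sum fun j e => wX j * e

theorem sumX_add (s t : σB →₀ ℕ) : sumX (s + t) = sumX s + sumX t :=
  Finsupp.sum_add_index' (fun a => by simp) (fun a b c => by ring)

theorem sumX_single (j : σB) (e : ℕ) : sumX (Finsupp.single j e) = wX j * e :=
  Finsupp.sum_single_index (by simp)

/-- `p` has x-degree at most `d`. -/
def degXle (d : ℕ) (p : SSpace) : Prop := ∀ s ∈ p.support, sumX s ≤ d

theorem degXle_neg {d p} (h : degXle d p) : degXle d (-p) := by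
  intro s hs; rw [support_neg] at hs; exact h s hs

theorem degXle_add {d p q} (hp : degXle d p) (hq : degXle d q) : degXle d (p + q) := by
  classical
  intro s hs
  rcases Finset.mem_union.mp (support_add hs) with h | h
  · exact hp s h
  · exact hq s h

theorem degXle_smul {d c p} (h : degXle d p) : degXle d ((c : ℂ) • p) :=
  fun s hs => h s (support_smul hs)

theorem degXle_finsum {ι : Type*} {d} {g : ι → SSpace} (h : ∀ i, degXle d (g i)) :
    degXle d (∑ᶠ i, g i) := by
  intro s hs
  rw [mem_support_iff] at hs
  by_contra hd
  apply hs
  apply bf_coeff_finsum_eq_zero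
  intro i
  by_contra hc
  exact hd (h i s (mem_support_iff.mpr hc))

theorem degXle_zero {d} : degXle d (0 : SSpace) := by
  intro s hs; simp at hs

theorem mem_support_X_mul {j : σB} {s : σB →₀ ℕ} {p : SSpace}
    (hs : s ∈ (X j * p).support) :
    s - Finsupp.single j 1 ∈ p.support ∧ s = (s - Finsupp.single j 1) + Finsupp.single j 1 := by
  classical
  rw [mem_support_iff, coeff_X_mul'] at hs
  split_ifs at hs with hj
  · refine ⟨mem_support_iff.mpr hs, ?_⟩
    rw [Finsupp.mem_support_iff] at hj
    ext a
    rw [Finsupp.add_apply, Finsupp.tsub_apply]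
    rcases eq_or_ne a j with rfl | ha
    · rw [Finsupp.single_eq_same]; omega
    · rw [Finsupp.single_eq_of_ne' (Ne.symm ha)]; omega
  · exact absurd rfl hs


/-- `p` involves no `x` variables. -/
def xfree (p : SSpace) : Prop := ∀ m : ℤ, pderiv (Sum.inl m) p = 0

theorem finsum_hop_zero {n : ℤ} {p : SSpace} (hx : xfree p) :
    (∑ᶠ m : ℤ, X (Sum.inl (m + n)) * pderiv (Sum.inl m) p) = (0 : SSpace) := by
  rw [finsum_congr (fun m => by rw [hx m, mul_zero] : ∀ m : ℤ,
    X (Sum.inl (m + n)) * pderiv (Sum.inl m) p = (0 : SSpace))]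
  exact finsum_zero

theorem hop_pos_of_xfree (K J : ℂ) (k : κB) {p : SSpace} (hx : xfree p) :
    hop K J (k : ℕ) p = (2 * ((k : ℕ) : ℂ) * K) • pderiv (Sum.inr k) p := by
  have hk : 1 ≤ (k : ℕ) := k.2
  have h1 : ¬ ((k : ℕ) : ℤ) < 0 := by omega
  have h2 : (0 : ℤ) < ((k : ℕ) : ℤ) := by omega
  have h3 : ¬ ((k : ℕ) : ℤ) = 0 := by omega
  rw [hop, dif_neg h1, dif_pos h2, if_neg h3, finsum_hop_zero hx]
  have hsub : (⟨(((k : ℕ) : ℤ)).toNat, by omega⟩ : κB) = k := Subtype.ext (by simp)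
  rw [hsub]
  push_cast
  simp

theorem hop_neg_of_xfree (K J : ℂ) (k : κB) {p : SSpace} (hx : xfree p) :
    hop K J (-(k : ℕ) : ℤ) p = X (Sum.inr k) * p := by
  have hk : 1 ≤ (k : ℕ) := k.2
  have h1 : (-(k : ℕ) : ℤ) < 0 := by omega
  have h2 : ¬ (0 : ℤ) < (-(k : ℕ) : ℤ) := by omega
  have h3 : ¬ (-(k : ℕ) : ℤ) = 0 := by omega
  rw [hop, dif_pos h1, dif_neg h2, if_neg h3, finsum_hop_zero hx]
  have hsub : (⟨(-(-(k : ℕ) : ℤ)).toNat, by omega⟩ : κB) = k := Subtype.ext (by simp)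
  rw [hsub]
  simp

theorem degXle_T1 {d : ℕ} {q : SSpace} (h : degXle (d + 1) q) (j i i' : ℤ) :
    degXle d (X (Sum.inl j) * pderiv (Sum.inl i) (pderiv (Sum.inl i') q)) := by
  intro s hs
  obtain ⟨hs1, hs2⟩ := mem_support_X_mul hs
  have h2 := bf_mem_support_pderiv (bf_mem_support_pderiv hs1)
  have := h _ h2
  rw [sumX_add, sumX_add, sumX_single, sumX_single] at this
  rw [hs2, sumX_add, sumX_single]
  simp only [wX, Sum.elim_inl] at *
  omega

theorem degXle_T2 {d : ℕ} {q : SSpace} (h : degXle (d + 1) q) (k : κB) (i : ℤ) :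
    degXle d (X (Sum.inr k) * pderiv (Sum.inl i) q) := by
  intro s hs
  obtain ⟨hs1, hs2⟩ := mem_support_X_mul hs
  have h2 := bf_mem_support_pderiv hs1
  have := h _ h2
  rw [sumX_add, sumX_single] at this
  rw [hs2, sumX_add, sumX_single]
  simp only [wX, Sum.elim_inl, Sum.elim_inr] at *
  omega

theorem degXle_T3 {d : ℕ} {q : SSpace} (h : degXle (d + 1) q) (k : κB) (i : ℤ) :
    degXle d (pderiv (Sum.inr k) (pderiv (Sum.inl i) q)) := by
  intro s hs
  have h2 := bf_mem_support_pderiv (bf_mem_support_pderiv hs)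
  have := h _ h2
  rw [sumX_add, sumX_add, sumX_single, sumX_single] at this
  simp only [wX, Sum.elim_inl, Sum.elim_inr] at *
  omega

theorem degXle_T4 {d : ℕ} {q : SSpace} (h : degXle (d + 1) q) (i : ℤ) :
    degXle d (pderiv (Sum.inl i) q) := by
  intro s hs
  have h2 := bf_mem_support_pderiv hs
  have := h _ h2
  rw [sumX_add, sumX_single] at this
  simp only [wX, Sum.elim_inl] at *
  omega

theorem degXle_eop {K J : ℂ} {n : ℤ} {d : ℕ} {q : SSpace} (h : degXle (d + 1) q) :
    degXle d (eop K J n q) := by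
  rw [eop]
  refine degXle_add (degXle_add (degXle_add ?_ ?_) ?_) ?_
  · exact degXle_neg (degXle_finsum fun mk => degXle_T1 h _ _ _)
  · exact degXle_finsum fun k => degXle_T2 h _ _
  · exact degXle_smul (degXle_finsum fun m => degXle_smul (degXle_T3 h _ _))
  · exact degXle_smul (degXle_T4 h _)


theorem apply_le_degsum (s : σB →₀ ℕ) (a : σB) : s a ≤ s.sum fun _ e => e := by
  classical
  by_cases ha : a ∈ s.support
  · exact Finset.single_le_sum (f := fun i => s i) (fun i _ => Nat.zero_le _) ha
  · rw [Finsupp.notMem_support_iff.mp ha]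
    exact Nat.zero_le _

theorem X_mul_monomial' (j : σB) (s : σB →₀ ℕ) (c : ℂ) :
    X j * monomial s c = monomial (Finsupp.single j 1 + s) c := by
  rw [X, monomial_mul, one_mul]

theorem xfree_monomial {s : σB →₀ ℕ} (hx : ∀ m : ℤ, s (Sum.inl m) = 0) (c : ℂ) :
    xfree (monomial s c) := by
  intro m
  rw [pderiv_monomial, hx m]
  push_cast
  rw [mul_zero, map_zero]

theorem C_mem_of_one_mem {N : Submodule ℂ SSpace} (h1 : (1 : SSpace) ∈ N) (c : ℂ) :
    monomial 0 c ∈ N := by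
  have hC : (monomial 0 c : SSpace) = c • (1 : SSpace) := by
    rw [monomial_zero', smul_eq_C_mul, mul_one]
  rw [hC]
  exact N.smul_mem c h1

theorem stepB {K J : ℂ} {N : Submodule ℂ SSpace}
    (hh : ∀ n : ℤ, ∀ q ∈ N, hop K J n q ∈ N)
    (hf : ∀ n : ℤ, ∀ q ∈ N, fop n q ∈ N)
    (h1 : (1 : SSpace) ∈ N) : N = ⊤ := by
  classical
  have key : ∀ d (s : σB →₀ ℕ) (c : ℂ), (s.sum fun _ e => e) ≤ d → monomial s c ∈ N := by
    intro d
    induction d with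
    | zero =>
      intro s c hs
      have hs0 : s = 0 := by
        ext a
        have := apply_le_degsum s a
        simp only [Finsupp.coe_zero, Pi.zero_apply]
        omega
      rw [hs0]
      exact C_mem_of_one_mem h1 c
    | succ d ih =>
      intro s c hs
      by_cases hs0 : s = 0
      · rw [hs0]; exact C_mem_of_one_mem h1 c
      obtain ⟨a, ha⟩ : ∃ a, s a ≠ 0 := by
        by_contra hc
        push_neg at hc
        exact hs0 (Finsupp.ext hc)
      by_cases hx : ∀ m : ℤ, s (Sum.inl m) = 0
      · -- y-step
        rcases a with m | k
        · exact absurd (hx m) ha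
        set s' := s - Finsupp.single (Sum.inr k) 1 with hs'def
        have hsplit : s = Finsupp.single (Sum.inr k) 1 + s' := by
          ext a'
          rw [Finsupp.add_apply, hs'def, Finsupp.tsub_apply]
          rcases eq_or_ne a' (Sum.inr k) with rfl | hne
          · rw [Finsupp.single_eq_same]; omega
          · rw [Finsupp.single_eq_of_ne' (Ne.symm hne)]; omega
        have hsum' : (s'.sum fun _ e => e) ≤ d := by
          have htot : (s.sum fun _ e => e) =
              ((Finsupp.single (Sum.inr k) 1 : σB →₀ ℕ).sum fun _ e => e)
              + (s'.sum fun _ e => e) := by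
            rw [hsplit, Finsupp.sum_add_index (by simp) (by simp)]
          rw [Finsupp.sum_single_index (by simp)] at htot
          omega
        have hx' : ∀ m : ℤ, s' (Sum.inl m) = 0 := by
          intro m
          rw [hs'def, Finsupp.tsub_apply, hx m]
          omega
        have hu := hh (-(k : ℕ)) _ (ih s' c hsum')
        rw [hop_neg_of_xfree K J k (xfree_monomial hx' c), X_mul_monomial', ← hsplit] at hu
        exact hu
      · push_neg at hx
        obtain ⟨m, hm⟩ := hx
        set s' := s - Finsupp.single (Sum.inl m) 1 with hs'def
        have hsplit : s = Finsupp.single (Sum.inl m) 1 + s' := by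
          ext a'
          rw [Finsupp.add_apply, hs'def, Finsupp.tsub_apply]
          rcases eq_or_ne a' (Sum.inl m) with rfl | hne
          · rw [Finsupp.single_eq_same]; omega
          · rw [Finsupp.single_eq_of_ne' (Ne.symm hne)]; omega
        have hsum' : (s'.sum fun _ e => e) ≤ d := by
          have htot : (s.sum fun _ e => e) =
              ((Finsupp.single (Sum.inl m) 1 : σB →₀ ℕ).sum fun _ e => e)
              + (s'.sum fun _ e => e) := by
            rw [hsplit, Finsupp.sum_add_index (by simp) (by simp)]
          rw [Finsupp.sum_single_index (by simp)] at htot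
          omega
        have hu := hf m _ (ih s' c hsum')
        rw [fop, X_mul_monomial', ← hsplit] at hu
        exact hu
  rw [eq_top_iff]
  intro p _
  rw [← support_sum_monomial_coeff p]
  exact Submodule.sum_mem N fun s _ => key _ s _ le_rfl


theorem stepA2 {K J : ℂ} (hK : K ≠ 0) {N : Submodule ℂ SSpace}
    (hh : ∀ n : ℤ, ∀ q ∈ N, hop K J n q ∈ N) :
    ∀ d (p : SSpace), p ∈ N → p ≠ 0 → xfree p → p.totalDegree ≤ d → (1 : SSpace) ∈ N := by
  intro d
  induction d with
  | zero =>
    intro p hpN hp0 hx hd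
    by_cases hy : ∀ k : κB, pderiv (Sum.inr k) p = 0
    · have hall : ∀ i : σB, pderiv i p = 0 := by
        intro i
        cases i with
        | inl m => exact hx m
        | inr k => exact hy k
      have hC := bf_eq_C_of_pderiv_eq_zero hall
      have hc0 : coeff 0 p ≠ 0 := fun h => hp0 (by rw [hC, h, map_zero])
      have hone : (coeff 0 p)⁻¹ • p = 1 := by
        rw [hC, smul_eq_C_mul, ← C_mul, coeff_C, if_pos rfl, inv_mul_cancel₀ hc0, C_1]
      rw [← hone]
      exact N.smul_mem _ hpN
    · exfalso
      push_neg at hy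
      obtain ⟨k, hk⟩ := hy
      have := bf_totalDegree_pderiv_lt hk
      omega
  | succ d ih =>
    intro p hpN hp0 hx hd
    by_cases hy : ∀ k : κB, pderiv (Sum.inr k) p = 0
    · have hall : ∀ i : σB, pderiv i p = 0 := by
        intro i
        cases i with
        | inl m => exact hx m
        | inr k => exact hy k
      have hC := bf_eq_C_of_pderiv_eq_zero hall
      have hc0 : coeff 0 p ≠ 0 := fun h => hp0 (by rw [hC, h, map_zero])
      have hone : (coeff 0 p)⁻¹ • p = 1 := by
        rw [hC, smul_eq_C_mul, ← C_mul, coeff_C, if_pos rfl, inv_mul_cancel₀ hc0, C_1]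
      rw [← hone]
      exact N.smul_mem _ hpN
    · push_neg at hy
      obtain ⟨k, hk⟩ := hy
      have hc : (2 * ((k : ℕ) : ℂ) * K) ≠ 0 := by
        have hkk : ((k : ℕ) : ℂ) ≠ 0 := Nat.cast_ne_zero.mpr (by have := k.2; omega)
        exact mul_ne_zero (mul_ne_zero two_ne_zero hkk) hK
      have hmem : pderiv (Sum.inr k) p ∈ N := by
        have hm := hh ((k : ℕ) : ℤ) p hpN
        rw [hop_pos_of_xfree K J k hx] at hm
        have heq : pderiv (Sum.inr k) p
            = (2 * ((k : ℕ) : ℂ) * K)⁻¹ • ((2 * ((k : ℕ) : ℂ) * K) • pderiv (Sum.inr k) p) := by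
          rw [smul_smul, inv_mul_cancel₀ hc, one_smul]
        rw [heq]
        exact N.smul_mem _ hm
      refine ih (pderiv (Sum.inr k) p) hmem hk (fun m => ?_) ?_
      · rw [bf_pderiv_comm, hx m, map_zero]
      · have := bf_totalDegree_pderiv_lt hk
        omega


theorem stepA1 {K J : ℂ} {N : Submodule ℂ SSpace}
    (he : ∀ n : ℤ, ∀ q ∈ N, eop K J n q ∈ N) :
    ∀ d (q : SSpace), q ∈ N → q ≠ 0 → degXle d q →
      ∃ p, p ∈ N ∧ p ≠ 0 ∧ xfree p := by
  classical
  intro d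
  induction d with
  | zero =>
    intro q hqN hq0 hdeg
    refine ⟨q, hqN, hq0, fun m => ?_⟩
    by_contra hm
    obtain ⟨s, hs⟩ := support_nonempty.mpr hm
    have h2 := hdeg _ (bf_mem_support_pderiv hs)
    rw [sumX_add, sumX_single] at h2
    simp only [wX, Sum.elim_inl, mul_one] at h2
    omega
  | succ d ih =>
    intro q hqN hq0 hdeg
    by_cases hx : xfree q
    · exact ⟨q, hqN, hq0, hx⟩
    unfold xfree at hx
    push_neg at hx
    obtain ⟨k₀, hk₀⟩ := hx
    set B : ℕ := 1 + q.vars.sup (fun v => Sum.elim Int.natAbs Subtype.val v) with hB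
    have hvB : ∀ v ∈ q.vars, Sum.elim Int.natAbs Subtype.val v < B := by
      intro v hv
      have h2 : Sum.elim Int.natAbs Subtype.val v
          ≤ q.vars.sup (fun v => Sum.elim Int.natAbs Subtype.val v) := Finset.le_sup hv
      omega
    have hxB : ∀ j : ℤ, pderiv (Sum.inl j) q ≠ 0 → j.natAbs < B := by
      intro j hj
      have hjv : Sum.inl j ∈ q.vars := by
        by_contra hc
        exact hj (pderiv_eq_zero_of_notMem_vars hc)
      simpa using hvB _ hjv
    have hyB : ∀ s ∈ q.support, ∀ k : κB, ¬ ((k : ℕ) < B) → s (Sum.inr k) = 0 := by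
      intro s hs k hk
      by_contra hc
      have hv : Sum.inr k ∈ q.vars := (mem_vars _).mpr ⟨s, hs, Finsupp.mem_support_iff.mpr hc⟩
      have := hvB _ hv
      simp only [Sum.elim_inr] at this
      omega
    have hk₀B : k₀.natAbs < B := hxB k₀ hk₀
    set n : ℤ := -(2 * (B : ℤ)) with hn
    have hKhat1 : 1 ≤ (2 * (B : ℤ) - k₀).toNat := by omega
    set Khat : κB := ⟨(2 * (B : ℤ) - k₀).toNat, hKhat1⟩ with hKh
    have hKhatval : ((Khat : ℕ) : ℤ) = 2 * (B : ℤ) - k₀ := by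
      rw [hKh]
      exact Int.toNat_of_nonneg (by omega)
    have hKhatB : ¬ ((Khat : ℕ) < B) := by omega
    obtain ⟨sstar, hsstar⟩ := support_nonempty.mpr hk₀
    set t : (σB →₀ ℕ) := sstar + Finsupp.single (Sum.inr Khat) 1 with ht
    have hclean : ∀ s ∈ q.support, s (Sum.inr Khat) = 0 := fun s hs => hyB s hs Khat hKhatB
    have htK : t (Sum.inr Khat) ≠ 0 := by
      rw [ht, Finsupp.add_apply, Finsupp.single_eq_same]
      omega
    have hcln_pd : ∀ (i : σB) (p : SSpace), (∀ s ∈ p.support, s (Sum.inr Khat) = 0) →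
        ∀ s ∈ (pderiv i p).support, s (Sum.inr Khat) = 0 := by
      intro i p hp s hs
      have := hp _ (bf_mem_support_pderiv hs)
      rw [Finsupp.add_apply] at this
      omega
    have hcoeff_zero : ∀ (p : SSpace), (∀ s ∈ p.support, s (Sum.inr Khat) = 0) →
        ∀ u : σB →₀ ℕ, u (Sum.inr Khat) ≠ 0 → coeff u p = 0 := by
      intro p hp u hu
      by_contra hc
      exact hu (hp u (mem_support_iff.mpr hc))
    -- term 4 vanishes
    have hT4 : pderiv (Sum.inl (-n)) q = 0 := by
      by_contra hc
      have := hxB _ hc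
      omega
    -- term 3 summands vanish
    have hT3 : ∀ m : κB, pderiv (Sum.inl ((m : ℤ) - n)) q = 0 := by
      intro m
      by_contra hc
      have h1 := hxB _ hc
      have h2 := m.2
      omega
    have h3 : (∑ᶠ m : κB, ((m : ℕ) : ℂ) •
        pderiv (Sum.inr m) (pderiv (Sum.inl ((m : ℤ) - n)) q)) = (0 : SSpace) := by
      rw [finsum_congr (fun m => by rw [hT3 m, map_zero, smul_zero] : ∀ m : κB,
        ((m : ℕ) : ℂ) • pderiv (Sum.inr m) (pderiv (Sum.inl ((m : ℤ) - n)) q) = (0 : SSpace))]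
      exact finsum_zero
    -- term 1 has zero coefficient at t
    have hT1 : coeff t (∑ᶠ mk : ℤ × ℤ, X (Sum.inl (mk.2 + mk.1 + n)) *
        pderiv (Sum.inl mk.2) (pderiv (Sum.inl mk.1) q)) = 0 := by
      apply bf_coeff_finsum_eq_zero
      intro mk
      rw [coeff_X_mul']
      split_ifs with hj
      · apply hcoeff_zero _ (hcln_pd _ _ (hcln_pd _ _ hclean))
        rw [Finsupp.tsub_apply, Finsupp.single_eq_of_ne' (by simp)]
        omega
      · rfl
    -- term 2 : finite support
    have hfin : (Function.support fun k : κB =>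
        X (Sum.inr k) * pderiv (Sum.inl (-(k : ℤ) - n)) q).Finite := by
      apply Set.Finite.subset (Set.Finite.preimage
        (Set.injOn_of_injective Subtype.val_injective)
        (Set.finite_Iio (3 * B)))
      intro k hk
      simp only [Function.mem_support] at hk
      have hpd : pderiv (Sum.inl (-(k : ℤ) - n)) q ≠ 0 := fun h0 => hk (by rw [h0, mul_zero])
      have := hxB _ hpd
      simp only [Set.mem_preimage, Set.mem_Iio]
      omega
    have hothers : ∀ k : κB, k ≠ Khat →
        coeff t (X (Sum.inr k) * pderiv (Sum.inl (-(k : ℤ) - n)) q) = 0 := by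
      intro k hkK
      by_cases hz : pderiv (Sum.inl (-(k : ℤ) - n)) q = 0
      · rw [hz, mul_zero, coeff_zero]
      · have hkB := hxB _ hz
        rw [coeff_X_mul']
        split_ifs with hj
        · exfalso
          rw [Finsupp.mem_support_iff, ht, Finsupp.add_apply,
            Finsupp.single_eq_of_ne' (fun hcon => hkK (Sum.inr.inj hcon).symm)] at hj
          have hsy := hyB _ (bf_mem_support_pderiv hsstar) k (by omega)
          rw [Finsupp.add_apply, Finsupp.single_eq_of_ne' (by simp)] at hsy
          omega
        · rfl
    have h2 : coeff t (∑ᶠ k : κB, X (Sum.inr k) * pderiv (Sum.inl (-(k : ℤ) - n)) q)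
        = coeff sstar (pderiv (Sum.inl k₀) q) := by
      rw [bf_coeff_finsum_eq_single Khat hfin hothers]
      have hidx : -((Khat : ℕ) : ℤ) - n = k₀ := by omega
      rw [hidx, ht, add_comm sstar, coeff_X_mul]
    have heop : eop K J n q
        = -(∑ᶠ mk : ℤ × ℤ, X (Sum.inl (mk.2 + mk.1 + n)) *
            pderiv (Sum.inl mk.2) (pderiv (Sum.inl mk.1) q))
          + (∑ᶠ k : κB, X (Sum.inr k) * pderiv (Sum.inl (-(k : ℤ) - n)) q) := by
      rw [eop, h3, hT4, smul_zero, smul_zero, add_zero, add_zero]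
    have hmain : coeff t (eop K J n q) = coeff sstar (pderiv (Sum.inl k₀) q) := by
      rw [heop, coeff_add, coeff_neg, hT1, h2, neg_zero, zero_add]
    have hne : eop K J n q ≠ 0 := by
      intro h0
      rw [h0, coeff_zero] at hmain
      exact mem_support_iff.mp hsstar hmain.symm
    exact ih _ (he n q hqN) hne (degXle_eop hdeg)


/-- The ideal generated by the `y` variables. -/
noncomputable def Iy : Ideal SSpace := Ideal.span (Set.range fun k : κB => (X (Sum.inr k) : SSpace))

theorem pderiv_inl_mem (m : ℤ) : ∀ q ∈ Iy, pderiv (Sum.inl m) q ∈ Iy := by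
  intro q hq
  induction hq using Submodule.span_induction with
  | mem x hx =>
    obtain ⟨k, rfl⟩ := hx
    rw [pderiv_X_of_ne (by simp)]
    exact Iy.zero_mem
  | zero =>
    rw [map_zero]
    exact Iy.zero_mem
  | add x y hx hy ihx ihy =>
    rw [map_add]
    exact Ideal.add_mem _ ihx ihy
  | smul a x hx ihx =>
    rw [smul_eq_mul, pderiv_mul]
    exact Ideal.add_mem _ (Iy.mul_mem_left _ hx) (Iy.mul_mem_left _ ihx)

theorem K0_reducible (J : ℂ) : ∃ N : Submodule ℂ SSpace,
    (∀ n : ℤ, ∀ q ∈ N, eop 0 J n q ∈ N) ∧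
    (∀ n : ℤ, ∀ q ∈ N, hop 0 J n q ∈ N) ∧
    (∀ n : ℤ, ∀ q ∈ N, fop n q ∈ N) ∧ N ≠ ⊥ ∧ N ≠ ⊤ := by
  classical
  refine ⟨Submodule.restrictScalars ℂ (Iy : Submodule SSpace SSpace), ?_, ?_, ?_, ?_, ?_⟩
  · intro n q hq
    simp only [Submodule.restrictScalars_mem] at *
    rw [eop]
    refine Ideal.add_mem _ (Ideal.add_mem _ (Ideal.add_mem _ ?_ ?_) ?_) ?_
    · refine Submodule.neg_mem _ (bf_finsum_mem_submodule
        (Submodule.restrictScalars ℂ (Iy : Submodule SSpace SSpace)) _ fun mk => ?_)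
      exact Iy.mul_mem_left _ (pderiv_inl_mem _ _ (pderiv_inl_mem _ _ hq))
    · refine bf_finsum_mem_submodule
        (Submodule.restrictScalars ℂ (Iy : Submodule SSpace SSpace)) _ fun k => ?_
      exact Iy.mul_mem_left _ (pderiv_inl_mem _ _ hq)
    · rw [mul_zero, zero_smul]
      exact Iy.zero_mem
    · rw [smul_eq_C_mul]
      exact Iy.mul_mem_left _ (pderiv_inl_mem _ _ hq)
  · intro n q hq
    simp only [Submodule.restrictScalars_mem] at *
    rw [hop]
    refine Ideal.add_mem _ (Ideal.add_mem _ (Ideal.add_mem _ ?_ ?_) ?_) ?_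
    · refine Submodule.neg_mem _ (Submodule.smul_mem _ _ (bf_finsum_mem_submodule
        (Submodule.restrictScalars ℂ (Iy : Submodule SSpace SSpace)) _ fun m => ?_))
      exact Iy.mul_mem_left _ (pderiv_inl_mem _ _ hq)
    · split_ifs with hn
      · exact Iy.mul_mem_left _ hq
      · exact Iy.zero_mem
    · split_ifs with hn
      · rw [mul_zero, zero_smul]
        exact Iy.zero_mem
      · exact Iy.zero_mem
    · rw [smul_eq_C_mul]
      exact Iy.mul_mem_left _ hq
  · intro n q hq
    simp only [Submodule.restrictScalars_mem] at *
    exact Iy.mul_mem_left _ hq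
  · intro hbot
    have hX : (X (Sum.inr ⟨1, le_refl 1⟩) : SSpace) ∈
        Submodule.restrictScalars ℂ (Iy : Submodule SSpace SSpace) := by
      simp only [Submodule.restrictScalars_mem]
      exact Ideal.subset_span ⟨⟨1, le_refl 1⟩, rfl⟩
    rw [hbot, Submodule.mem_bot] at hX
    exact X_ne_zero _ hX
  · intro htop
    have h1 : (1 : SSpace) ∈ Iy := by
      have h2 : (1 : SSpace) ∈ Submodule.restrictScalars ℂ (Iy : Submodule SSpace SSpace) := by
        rw [htop]; trivial
      exact h2
    have hle : Iy ≤ RingHom.ker (constantCoeff : SSpace →+* ℂ) := by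
      rw [Iy, Ideal.span_le]
      rintro _ ⟨k, rfl⟩
      rw [SetLike.mem_coe, RingHom.mem_ker, constantCoeff_X]
    have := hle h1
    rw [RingHom.mem_ker, map_one] at this
    exact one_ne_zero this

end BFaux

/-- the only subspaces of `S` invariant under all of the Bernard–Felder
operators `e_n, h_n, f_n` (`n ∈ ℤ`) are `{0}` and `S` if and only if `K ≠ 0`;
i.e. the Bernard–Felder module is irreducible if and only if `K ≠ 0`. -/

theorem bernard_felder_irreducible_iff (K J : ℂ) :
    (∀ N : Submodule ℂ SSpace,
      (∀ n : ℤ, ∀ q ∈ N, eop K J n q ∈ N) →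
      (∀ n : ℤ, ∀ q ∈ N, hop K J n q ∈ N) →
      (∀ n : ℤ, ∀ q ∈ N, fop n q ∈ N) →
      N = ⊥ ∨ N = ⊤) ↔ K ≠ 0 := by
  constructor
  · intro h hK0
    subst hK0
    obtain ⟨N, he, hh, hf, hbot, htop⟩ := BFaux.K0_reducible J
    rcases h N he hh hf with h1 | h1
    · exact hbot h1
    · exact htop h1
  · intro hK N hNe hNh hNf
    by_cases hbot : N = ⊥
    · exact Or.inl hbot
    refine Or.inr ?_
    obtain ⟨q, hqN, hq0⟩ := Submodule.exists_mem_ne_zero_of_ne_bot hbot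
    obtain ⟨p, hpN, hp0, hpx⟩ := BFaux.stepA1 hNe (q.support.sup BFaux.sumX) q hqN hq0
      (fun s hs => Finset.le_sup hs)
    exact BFaux.stepB hNh hNf (BFaux.stepA2 hK hNh p.totalDegree p hpN hp0 hpx le_rfl)
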